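/- Fix n ∈ ℕ and natural numbers j_1 < j_2 < ⋯ < j_{n−1}, and ρ > 0. Then there exist n points z_1,…,z_n on the circle {|z| = ρ} such that the generalized Vandermonde determinant det A, where A is the n×n matrix with rows (1, z_m^{j_1}, …, z_m^{j_{n−1}}) for m = 1,…,n, satisfies |det A| ≥ ρ^{j_1 + ⋯ + j_{n−1}}. -/

import Mathlib

open Complex Matrix

/-- Generalized Vandermonde: given exponents `0 = e₀ < e₁ < ⋯ < e_{n-1}` and `ρ > 0`,
there exist `n` points on the circle `{|z| = ρ}` such that the generalized Vandermonde
matrix `A = (z_m^{e_i})` satisfies `|det A| ≥ ρ^{Σ e_i}`. -/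
theorem stmt_13 (n : ℕ) (hn : 0 < n) (e : Fin n → ℕ) (he : StrictMono e)
    (h0 : e ⟨0, hn⟩ = 0) (ρ : ℝ) (hρ : 0 < ρ) :
    ∃ z : Fin n → ℂ, (∀ m, ‖z m‖ = ρ) ∧
      ρ ^ (∑ i, e i) ≤ ‖Matrix.det (Matrix.of fun m i : Fin n => z m ^ e i)‖ := by
  classical
  set E := ∑ i, e i with hE
  set N := E + 1 with hNdef
  have hN0 : (N : ℕ) ≠ 0 := Nat.succ_ne_zero _
  have heltN : ∀ i, e i < N := fun i =>
    Nat.lt_succ_of_le (Finset.single_le_sum (f := e) (fun _ _ => Nat.zero_le _)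
      (Finset.mem_univ i))
  set ζ : ℂ := Complex.exp (2 * Real.pi * Complex.I / N) with hζdef
  have hprim : IsPrimitiveRoot ζ N := Complex.isPrimitiveRoot_exp N hN0
  have hζ0 : ζ ≠ 0 := by rw [hζdef]; exact Complex.exp_ne_zero _
  have habs : ‖ζ‖ = 1 := by
    have h : ζ = Complex.exp ((2 * Real.pi / N : ℝ) * Complex.I) := by
      rw [hζdef]; push_cast; ring_nf
    rw [h, Complex.norm_exp_ofReal_mul_I]
  have hconj : (starRingEnd ℂ) ζ = ζ⁻¹ := (Complex.inv_eq_conj habs).symm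
  -- key orthogonality
  have key : ∀ a b : ℕ, a < N → b < N →
      (∑ j ∈ Finset.range N, ζ ^ (j * a) * (starRingEnd ℂ) (ζ ^ (j * b))) =
        if a = b then (N : ℂ) else 0 := by
    intro a b ha hb
    have hx : ∀ j : ℕ, ζ ^ (j * a) * (starRingEnd ℂ) (ζ ^ (j * b))
        = (ζ ^ a * (ζ ^ b)⁻¹) ^ j := by
      intro j
      simp [map_pow, hconj, mul_pow, inv_pow, ← pow_mul, Nat.mul_comm j a, Nat.mul_comm j b]
    simp only [hx]
    by_cases hab : a = b
    · subst hab
      have hz0 : ζ ^ a ≠ 0 := pow_ne_zero _ hζ0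
      simp [mul_inv_cancel₀ hz0]
    · rw [if_neg hab]
      set x : ℂ := ζ ^ a * (ζ ^ b)⁻¹ with hxdef
      have hx1 : x ≠ 1 := by
        intro h
        apply hab
        have hb0 : ζ ^ b ≠ 0 := pow_ne_zero _ hζ0
        have : ζ ^ a = ζ ^ b := by
          exact (mul_inv_eq_one₀ hb0).mp h
        exact hprim.pow_inj ha hb this
      have hxN : x ^ N = 1 := by
        rw [hxdef, mul_pow, ← pow_mul, inv_pow, ← pow_mul, Nat.mul_comm a N,
          Nat.mul_comm b N, pow_mul, pow_mul, hprim.pow_eq_one]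
        simp
      rw [geom_sum_eq hx1, hxN]
      simp
  set z : (Fin n → Fin N) → Fin n → ℂ := fun k m => (ρ : ℂ) * ζ ^ (k m : ℕ) with hzdef
  have hzabs : ∀ k m, ‖z k m‖ = ρ := by
    intro k m
    simp [hzdef, _root_.map_mul, map_pow, habs, Complex.norm_real, abs_of_pos hρ]
  set D : (Fin n → Fin N) → ℂ :=
    fun k => Matrix.det (Matrix.of fun m i : Fin n => z k m ^ e i) with hDdef
  -- expansion of the determinant with rows reindexed by σ⁻¹
  have hDexp : ∀ k, D k = ∑ σ : Equiv.Perm (Fin n),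
      ((Equiv.Perm.sign σ : ℤ) : ℂ) * ∏ m, z k m ^ e (σ⁻¹ m) := by
    intro k
    simp only [hDdef]
    rw [Matrix.det_apply']
    refine Finset.sum_congr rfl fun σ _ => ?_
    congr 1
    rw [← Equiv.prod_comp σ (fun m => z k m ^ e (σ⁻¹ m))]
    simp
  -- inner sum over one coordinate
  have hm : ∀ a b : ℕ, a < N → b < N →
      (∑ j : Fin N, ((ρ:ℂ) * ζ ^ (j:ℕ)) ^ a * (starRingEnd ℂ) (((ρ:ℂ) * ζ ^ (j:ℕ)) ^ b))
        = (ρ:ℂ) ^ (a + b) * (if a = b then (N:ℂ) else 0) := by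
    intro a b ha hb
    have h1 : ∀ j : ℕ, ((ρ:ℂ) * ζ ^ j) ^ a * (starRingEnd ℂ) (((ρ:ℂ) * ζ ^ j) ^ b)
        = (ρ:ℂ) ^ (a + b) * (ζ ^ (j * a) * (starRingEnd ℂ) (ζ ^ (j * b))) := by
      intro j
      rw [mul_pow, mul_pow, ← pow_mul, ← pow_mul, _root_.map_mul, _root_.map_pow,
        Complex.conj_ofReal, pow_add]
      ring
    rw [Fin.sum_univ_eq_sum_range
      (fun j => ((ρ:ℂ) * ζ ^ j) ^ a * (starRingEnd ℂ) (((ρ:ℂ) * ζ ^ j) ^ b)) N]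
    simp only [h1]
    rw [← Finset.mul_sum, key a b ha hb]
  -- sum over all tuples k, for a fixed pair of permutations
  have hsum : ∀ σ τ : Equiv.Perm (Fin n),
      (∑ k : Fin n → Fin N,
          (∏ m, z k m ^ e (σ⁻¹ m)) * (starRingEnd ℂ) (∏ m, z k m ^ e (τ⁻¹ m)))
        = if σ = τ then (N:ℂ)^n * (ρ:ℂ)^(2*E) else 0 := by
    intro σ τ
    have h1 : ∀ k : Fin n → Fin N,
        (∏ m, z k m ^ e (σ⁻¹ m)) * (starRingEnd ℂ) (∏ m, z k m ^ e (τ⁻¹ m))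
          = ∏ m, (((ρ:ℂ) * ζ ^ ((k m : ℕ))) ^ e (σ⁻¹ m)
              * (starRingEnd ℂ) (((ρ:ℂ) * ζ ^ ((k m : ℕ))) ^ e (τ⁻¹ m))) := by
      intro k
      rw [map_prod, ← Finset.prod_mul_distrib]
    simp only [h1]
    rw [← Fintype.prod_sum (fun m (j : Fin N) => ((ρ:ℂ) * ζ ^ (j:ℕ)) ^ e (σ⁻¹ m)
        * (starRingEnd ℂ) (((ρ:ℂ) * ζ ^ (j:ℕ)) ^ e (τ⁻¹ m)))]
    by_cases hστ : σ = τ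
    · subst hστ
      rw [if_pos rfl]
      have h2 : ∀ m : Fin n, (∑ j : Fin N, ((ρ:ℂ) * ζ ^ (j:ℕ)) ^ e (σ⁻¹ m)
          * (starRingEnd ℂ) (((ρ:ℂ) * ζ ^ (j:ℕ)) ^ e (σ⁻¹ m)))
            = (N:ℂ) * ((ρ:ℂ)^2) ^ e (σ⁻¹ m) := by
        intro m
        rw [hm _ _ (heltN _) (heltN _), if_pos rfl, ← two_mul, pow_mul]
        ring
      simp only [h2]
      rw [Finset.prod_mul_distrib, Finset.prod_const, Finset.card_univ, Fintype.card_fin,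
        Finset.prod_pow_eq_pow_sum, Equiv.sum_comp σ⁻¹ e, ← hE, ← pow_mul]
    · rw [if_neg hστ]
      have hne : σ⁻¹ ≠ τ⁻¹ := fun h => hστ (by rw [← inv_inv σ, h, inv_inv])
      obtain ⟨m, hmne⟩ : ∃ m, σ⁻¹ m ≠ τ⁻¹ m := by
        by_contra hc
        push_neg at hc
        exact hne (Equiv.ext hc)
      refine Finset.prod_eq_zero (Finset.mem_univ m) ?_
      rw [hm _ _ (heltN _) (heltN _), if_neg (fun h => hmne (he.injective h)), mul_zero]
  -- the averaged identity
  have hsign : ∀ σ : Equiv.Perm (Fin n),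
      ((Equiv.Perm.sign σ : ℤ) : ℂ) * ((Equiv.Perm.sign σ : ℤ) : ℂ) = 1 := by
    intro σ
    rw [← Int.cast_mul, ← Units.val_mul, Int.units_mul_self]
    simp
  have main : (∑ k : Fin n → Fin N, D k * (starRingEnd ℂ) (D k))
      = ((Nat.factorial n : ℕ) : ℂ) * ((N:ℂ)^n * (ρ:ℂ)^(2*E)) := by
    have step1 : (∑ k : Fin n → Fin N, D k * (starRingEnd ℂ) (D k))
        = ∑ σ : Equiv.Perm (Fin n), ∑ τ : Equiv.Perm (Fin n),
            (((Equiv.Perm.sign σ : ℤ):ℂ) * ((Equiv.Perm.sign τ : ℤ):ℂ)) *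
              ∑ k : Fin n → Fin N,
                (∏ m, z k m ^ e (σ⁻¹ m)) * (starRingEnd ℂ) (∏ m, z k m ^ e (τ⁻¹ m)) := by
      calc (∑ k : Fin n → Fin N, D k * (starRingEnd ℂ) (D k))
          = ∑ k : Fin n → Fin N, ∑ σ : Equiv.Perm (Fin n), ∑ τ : Equiv.Perm (Fin n),
              (((Equiv.Perm.sign σ : ℤ):ℂ) * ((Equiv.Perm.sign τ : ℤ):ℂ)) *
                ((∏ m, z k m ^ e (σ⁻¹ m)) * (starRingEnd ℂ) (∏ m, z k m ^ e (τ⁻¹ m))) := by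
            refine Finset.sum_congr rfl fun k _ => ?_
            rw [hDexp k, map_sum, Finset.sum_mul_sum]
            refine Finset.sum_congr rfl fun σ _ => Finset.sum_congr rfl fun τ _ => ?_
            rw [_root_.map_mul, map_intCast]
            ring
        _ = ∑ σ : Equiv.Perm (Fin n), ∑ k : Fin n → Fin N, ∑ τ : Equiv.Perm (Fin n),
              (((Equiv.Perm.sign σ : ℤ):ℂ) * ((Equiv.Perm.sign τ : ℤ):ℂ)) *
                ((∏ m, z k m ^ e (σ⁻¹ m)) * (starRingEnd ℂ) (∏ m, z k m ^ e (τ⁻¹ m))) :=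
            Finset.sum_comm
        _ = ∑ σ : Equiv.Perm (Fin n), ∑ τ : Equiv.Perm (Fin n), ∑ k : Fin n → Fin N,
              (((Equiv.Perm.sign σ : ℤ):ℂ) * ((Equiv.Perm.sign τ : ℤ):ℂ)) *
                ((∏ m, z k m ^ e (σ⁻¹ m)) * (starRingEnd ℂ) (∏ m, z k m ^ e (τ⁻¹ m))) :=
            Finset.sum_congr rfl fun σ _ => Finset.sum_comm
        _ = _ := by
            refine Finset.sum_congr rfl fun σ _ => Finset.sum_congr rfl fun τ _ => ?_
            rw [← Finset.mul_sum]
    rw [step1]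
    simp only [hsum, mul_ite, mul_zero]
    rw [Finset.sum_congr rfl (fun σ _ => Finset.sum_ite_eq Finset.univ σ
      (fun τ => (((Equiv.Perm.sign σ : ℤ):ℂ) * ((Equiv.Perm.sign τ : ℤ):ℂ)) *
        ((N:ℂ)^n * (ρ:ℂ)^(2*E))))]
    simp only [Finset.mem_univ, if_pos, hsign, one_mul]
    rw [Finset.sum_const, Finset.card_univ, Fintype.card_perm, nsmul_eq_mul]
    simp
  -- pass to real numbers
  have main' : (∑ k : Fin n → Fin N, ‖D k‖ ^ 2)
      = ((Nat.factorial n : ℕ) : ℝ) * ((N:ℝ)^n * ρ^(2*E)) := by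
    have h1 : ∀ k, D k * (starRingEnd ℂ) (D k) = ((‖D k‖ ^ 2 : ℝ) : ℂ) := by
      intro k
      rw [Complex.mul_conj]
      norm_cast
      rw [Complex.sq_norm]
    rw [Finset.sum_congr rfl (fun k _ => h1 k)] at main
    exact_mod_cast main
  -- extract a good tuple
  haveI : Nonempty (Fin N) := ⟨⟨0, Nat.pos_of_ne_zero hN0⟩⟩
  have exmain : ∃ k, ρ ^ E ≤ ‖D k‖ := by
    by_contra hcon
    push_neg at hcon
    have hlt : ∀ k, ‖D k‖ ^ 2 < (ρ ^ E) ^ 2 := by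
      intro k
      have h2 := hcon k
      have h3 := norm_nonneg (D k)
      nlinarith [pow_pos hρ E]
    have hsumlt : (∑ k : Fin n → Fin N, ‖D k‖ ^ 2)
        < (N:ℝ)^n * (ρ ^ E) ^ 2 := by
      calc (∑ k : Fin n → Fin N, ‖D k‖ ^ 2)
          < ∑ _k : Fin n → Fin N, (ρ ^ E) ^ 2 :=
            Finset.sum_lt_sum_of_nonempty Finset.univ_nonempty (fun k _ => hlt k)
        _ = (N:ℝ)^n * (ρ ^ E) ^ 2 := by
            rw [Finset.sum_const, Finset.card_univ, nsmul_eq_mul]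
            simp [Fintype.card_fun]
    have hpow : ρ ^ (2*E) = (ρ ^ E) ^ 2 := by rw [Nat.mul_comm 2 E, pow_mul]
    rw [main', ← hpow] at hsumlt
    have hfac : (1 : ℝ) ≤ ((Nat.factorial n : ℕ) : ℝ) := by
      exact_mod_cast Nat.one_le_iff_ne_zero.mpr n.factorial_ne_zero
    have hNpos : (0:ℝ) < (N:ℝ)^n := pow_pos (by positivity) n
    nlinarith [mul_nonneg (sub_nonneg.2 hfac)
      (le_of_lt (mul_pos hNpos (pow_pos hρ (2*E))))]
  obtain ⟨k, hk⟩ := exmain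
  exact ⟨z k, hzabs k, hk⟩
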